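/- Small upward perturbations of the costs cannot insert new sets into the demand: for every success probability function f, cost function c, and α > 0, there exists ε > 0 such that for every cost function ĉ with c(a) ≤ ĉ(a) ≤ c(a) + ε for all a ∈ A, it holds that D_{f,ĉ}(α) ⊆ D_{f,c}(α). -/

import Mathlib

open Finset

/-- The agent's demand at contract `α`: sets maximizing `α·f(S) − c(S)`. -/
def Demand (n : ℕ) (f : Finset (Fin n) → ℝ) (c : Fin n → ℝ) (α : ℝ) :
    Set (Finset (Fin n)) :=
  {S | ∀ T : Finset (Fin n), α * f T - ∑ a ∈ T, c a ≤ α * f S - ∑ a ∈ S, c a}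

/-- `V_{f,c}(α)`: the maximal value of `f` over the demand at `α`. -/
noncomputable def Vfc (n : ℕ) (f : Finset (Fin n) → ℝ) (c : Fin n → ℝ) (α : ℝ) : ℝ :=
  sSup (f '' Demand n f c α)

/-- The critical set `C_{f,c}`. -/
def Critical (n : ℕ) (f : Finset (Fin n) → ℝ) (c : Fin n → ℝ) : Set ℝ :=
  {α | 0 < α ∧ α ≤ 1 ∧
    ∀ ε : ℝ, 0 < ε → ε ≤ α → Vfc n f c (α - ε) ≠ Vfc n f c α}

/-- Small upward perturbations of the costs cannot insert new sets into the demand. -/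
theorem demand_perturbation (n : ℕ) (f : Finset (Fin n) → ℝ) (c : Fin n → ℝ)
    (hf0 : f ∅ = 0) (hmono : ∀ S T : Finset (Fin n), S ⊆ T → f S ≤ f T)
    (hf01 : ∀ S : Finset (Fin n), 0 ≤ f S ∧ f S ≤ 1) (hc : ∀ a : Fin n, 0 < c a)
    (α : ℝ) (hα : 0 < α) :
    ∃ ε : ℝ, 0 < ε ∧ ∀ chat : Fin n → ℝ,
      (∀ a : Fin n, c a ≤ chat a ∧ chat a ≤ c a + ε) →
      Demand n f chat α ⊆ Demand n f c α := by
  classical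
  set u : Finset (Fin n) → ℝ := fun T => α * f T - ∑ a ∈ T, c a with hu
  clear_value u
  obtain ⟨S0, -, hS0⟩ :=
    Finset.exists_max_image (Finset.univ : Finset (Finset (Fin n))) u ⟨∅, Finset.mem_univ ∅⟩
  set B := Finset.univ.filter (fun T : Finset (Fin n) => T ∉ Demand n f c α) with hB
  by_cases hBe : B.Nonempty
  · set g := u S0 - B.sup' hBe u with hg
    have hsup : B.sup' hBe u < u S0 := by
      rw [Finset.sup'_lt_iff]
      intro T hT
      have hTnd : T ∉ Demand n f c α := (Finset.mem_filter.mp hT).2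
      simp only [Demand, Set.mem_setOf_eq, not_forall, not_le] at hTnd
      obtain ⟨T', hT'⟩ := hTnd
      have hle := hS0 T' (Finset.mem_univ T')
      simp only [hu] at hle ⊢
      linarith
    have hgpos : 0 < g := by simpa [hg] using hsup
    clear_value g
    refine ⟨g / (2 * (n + 1)), by positivity, ?_⟩
    intro chat hchat S hSd
    by_contra hS
    have hSB : S ∈ B := Finset.mem_filter.mpr ⟨Finset.mem_univ S, hS⟩
    have h1 : u S ≤ B.sup' hBe u := Finset.le_sup' u hSB
    have h2 : α * f S - ∑ a ∈ S, chat a ≥ α * f S0 - ∑ a ∈ S0, chat a := hSd S0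
    have h3 : u S ≥ α * f S - ∑ a ∈ S, chat a := by
      simp only [hu]
      have : ∑ a ∈ S, c a ≤ ∑ a ∈ S, chat a :=
        Finset.sum_le_sum fun a _ => (hchat a).1
      linarith
    have h4 : ∑ a ∈ S0, chat a ≤ ∑ a ∈ S0, c a + (n : ℝ) * (g / (2 * (n + 1))) := by
      have h5 : ∑ a ∈ S0, chat a ≤ ∑ a ∈ S0, (c a + g / (2 * (n + 1))) :=
        Finset.sum_le_sum fun a _ => (hchat a).2
      rw [Finset.sum_add_distrib] at h5
      have hcard : (S0.card : ℝ) ≤ n := by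
        have := Finset.card_le_univ S0
        exact_mod_cast (by simpa using this : S0.card ≤ n)
      have : ∑ _a ∈ S0, g / (2 * (n + 1)) = (S0.card : ℝ) * (g / (2 * (n + 1))) := by
        simp [Finset.sum_const, nsmul_eq_mul]
      nlinarith [div_pos hgpos (by positivity : (0:ℝ) < 2 * (n + 1))]
    have h6 : (n : ℝ) * (g / (2 * (n + 1))) < g := by
      rw [mul_div_assoc', div_lt_iff₀ (by positivity : (0:ℝ) < 2 * (n + 1))]
      nlinarith [Nat.cast_nonneg (α := ℝ) n]
    have h7 : u S0 - g < u S := by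
      have : u S ≥ u S0 - (n : ℝ) * (g / (2 * (n + 1))) := by
        simp only [hu] at *
        linarith
      linarith
    simp only [hg] at h7
    linarith
  · refine ⟨1, one_pos, fun chat _ S _ => ?_⟩
    by_contra hS
    exact hBe ⟨S, Finset.mem_filter.mpr ⟨Finset.mem_univ S, hS⟩⟩
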